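/- Let a ≥ 0 and N_a = {(z₁,z₂,z₃) ∈ ℂ³ : |z₁|² − 2a = |z₂|² = |z₃|², Im(z₁z₂z₃) = 0, Re(z₁z₂z₃) ≥ 0}. Then Im(dz₁∧dz₂∧dz₃) vanishes on every tangent space at smooth points of N_a; combined with ω|_{N_a} ≡ 0, N_a is special Lagrangian at its smooth points. -/

import Mathlib

open Complex

/-- The standard Kähler form ω of ℂ³ evaluated on a pair of tangent vectors. -/
noncomputable def stdKahlerForm (w z : ℂ × ℂ × ℂ) : ℝ :=
  ((starRingEnd ℂ w.1) * z.1 + (starRingEnd ℂ w.2.1) * z.2.1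
    + (starRingEnd ℂ w.2.2) * z.2.2).im

/-- The holomorphic volume form Ω = dz₁∧dz₂∧dz₃ of ℂ³ evaluated on a triple of
tangent vectors (a 3×3 complex determinant). -/
noncomputable def holVolForm (w₁ w₂ w₃ : ℂ × ℂ × ℂ) : ℂ :=
  Matrix.det !![w₁.1, w₁.2.1, w₁.2.2; w₂.1, w₂.2.1, w₂.2.2; w₃.1, w₃.2.1, w₃.2.2]

/-- The Harvey–Lawson U(1)²-invariant set N_a ⊂ ℂ³. -/
def HLset (a : ℝ) : Set (ℂ × ℂ × ℂ) :=
  {p | ‖p.1‖ ^ 2 - 2 * a = ‖p.2.1‖ ^ 2 ∧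
       ‖p.2.1‖ ^ 2 = ‖p.2.2‖ ^ 2 ∧
       (p.1 * p.2.1 * p.2.2).im = 0 ∧ 0 ≤ (p.1 * p.2.1 * p.2.2).re}

open Filter Topology


lemma key_conj {ξ η : ℂ} (h1 : Complex.normSq ξ = Complex.normSq η)
    (h2 : (ξ * η).im = 0) (h3 : 0 ≤ (ξ * η).re) : η = (starRingEnd ℂ) ξ := by
  rcases eq_or_ne ξ 0 with h | h
  · subst h
    have h0 : Complex.normSq η = 0 := by simpa using h1.symm
    have : η = 0 := Complex.normSq_eq_zero.1 h0
    simp [this]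
  · have hmul : ξ * η = ((ξ * η).re : ℂ) := Complex.ext rfl (by simpa using h2)
    have hsq : ((ξ * η).re) ^ 2 = (Complex.normSq ξ) ^ 2 := by
      have h4 : Complex.normSq (ξ * η) = Complex.normSq ξ * Complex.normSq η :=
        Complex.normSq_mul ξ η
      have h5 : Complex.normSq (ξ * η) = ((ξ * η).re) ^ 2 := by
        rw [Complex.normSq_apply, h2]; ring
      rw [h5, ← h1] at h4; rw [h4]; ring
    have hre : (ξ * η).re = Complex.normSq ξ := by
      have hn : 0 ≤ Complex.normSq ξ := Complex.normSq_nonneg ξ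
      nlinarith
    have : ξ * η = ξ * (starRingEnd ℂ) ξ := by
      rw [hmul, hre, Complex.mul_conj]
    exact mul_left_cancel₀ h this

lemma key_w1 {p w : ℂ} (hp : p ≠ 0) (h : ((starRingEnd ℂ) p * w).re = 0) :
    ∃ t : ℝ, w = Complex.I * (t : ℝ) * p := by
  set τ : ℝ := ((starRingEnd ℂ) p * w).im with hτ
  refine ⟨τ / Complex.normSq p, ?_⟩
  have hc : (starRingEnd ℂ) p ≠ 0 := by simpa using hp
  have hn : Complex.normSq p ≠ 0 := by simpa using hp
  apply mul_left_cancel₀ hc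
  have h1 : (starRingEnd ℂ) p * w = Complex.I * (τ : ℝ) := by
    apply Complex.ext <;> simp [h, hτ]
  rw [h1]
  have h2 : (starRingEnd ℂ) p * (Complex.I * ((τ / Complex.normSq p : ℝ)) * p)
      = Complex.I * ((τ / Complex.normSq p : ℝ)) * ((starRingEnd ℂ) p * p) := by ring
  rw [h2, Complex.conj_mul']
  rw [show ((‖p‖ : ℝ) : ℂ) ^ 2 = ((Complex.normSq p : ℝ) : ℂ) from by
    norm_cast; exact Complex.sq_norm p]
  push_cast
  field_simp
  rw [mul_div_assoc, div_self (by exact_mod_cast hn : ((Complex.normSq p : ℝ) : ℂ) ≠ 0), mul_one]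


private lemma seq_id (cc : ℝ) (pp dd : ℂ) :
    cc * (normSq (pp + dd) - normSq pp)
      = 2 * (pp * (starRingEnd ℂ) (((cc : ℝ) : ℂ) * dd)).re
        + ((((cc : ℝ) : ℂ) * dd) * (starRingEnd ℂ) dd).re := by
  simp [Complex.normSq_apply, Complex.mul_re, Complex.add_re, Complex.add_im,
    Complex.mul_im, Complex.conj_re, Complex.conj_im, Complex.ofReal_re, Complex.ofReal_im]
  ring

private lemma seq_id2 (cc : ℝ) (dd : ℂ) :
    cc * normSq dd = ((((cc : ℝ) : ℂ) * dd) * (starRingEnd ℂ) dd).re := by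
  simp [Complex.normSq_apply, Complex.mul_re, Complex.mul_im, Complex.conj_re,
    Complex.conj_im, Complex.ofReal_re, Complex.ofReal_im]
  ring

private lemma lim_aux {dj : ℕ → ℂ} {cj : ℕ → ℝ} {wj : ℂ} (pj : ℂ)
    (hd : Tendsto dj atTop (𝓝 0))
    (hcd : Tendsto (fun n => ((cj n : ℝ) : ℂ) * dj n) atTop (𝓝 wj)) :
    Tendsto (fun n => cj n * (normSq (pj + dj n) - normSq pj)) atTop
      (𝓝 (2 * (pj * (starRingEnd ℂ) wj).re)) := by
  have hconj : Tendsto (fun n => (starRingEnd ℂ) (((cj n : ℝ) : ℂ) * dj n)) atTop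
      (𝓝 ((starRingEnd ℂ) wj)) := (Complex.continuous_conj.tendsto _).comp hcd
  have hconjd : Tendsto (fun n => (starRingEnd ℂ) (dj n)) atTop (𝓝 ((starRingEnd ℂ) 0)) :=
    (Complex.continuous_conj.tendsto _).comp hd
  have hA : Tendsto (fun n => 2 * (pj * (starRingEnd ℂ) (((cj n : ℝ) : ℂ) * dj n)).re
      + ((((cj n : ℝ) : ℂ) * dj n) * (starRingEnd ℂ) (dj n)).re) atTop
      (𝓝 (2 * (pj * (starRingEnd ℂ) wj).re + (wj * (starRingEnd ℂ) 0).re)) := by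
    exact (tendsto_const_nhds.mul ((Complex.continuous_re.tendsto _).comp
        (tendsto_const_nhds.mul hconj))).add
      ((Complex.continuous_re.tendsto _).comp (hcd.mul hconjd))
  have hA' : Tendsto (fun n => 2 * (pj * (starRingEnd ℂ) (((cj n : ℝ) : ℂ) * dj n)).re
      + ((((cj n : ℝ) : ℂ) * dj n) * (starRingEnd ℂ) (dj n)).re) atTop
      (𝓝 (2 * (pj * (starRingEnd ℂ) wj).re)) := by simpa using hA
  exact hA'.congr (fun n => (seq_id (cj n) pj (dj n)).symm)

lemma tc_facts {a : ℝ} {p w : ℂ × ℂ × ℂ} (hp : p ∈ HLset a)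
    (hw : w ∈ tangentConeAt ℝ (HLset a) p) :
    ((starRingEnd ℂ) p.1 * w.1).re = ((starRingEnd ℂ) p.2.1 * w.2.1).re ∧
    ((starRingEnd ℂ) p.2.1 * w.2.1).re = ((starRingEnd ℂ) p.2.2 * w.2.2).re ∧
    (w.1 * p.2.1 * p.2.2 + p.1 * w.2.1 * p.2.2 + p.1 * p.2.1 * w.2.2).im = 0 ∧
    (p.2.1 = 0 → p.2.2 = 0 →
      Complex.normSq w.2.1 = Complex.normSq w.2.2 ∧
      (p.1 * w.2.1 * w.2.2).im = 0 ∧ 0 ≤ (p.1 * w.2.1 * w.2.2).re ∧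
      ((starRingEnd ℂ) p.1 * w.1).re = 0) := by
  obtain ⟨c, d, hc, hmem, hcd⟩ := mem_tangentConeAt_iff_exists_seq_norm_tendsto_atTop.mp hw
  have hd0 : Tendsto d atTop (𝓝 0) := tangentConeAt.lim_zero atTop hc hcd
  have hd1 : Tendsto (fun n => (d n).1) atTop (𝓝 (0 : ℂ)) := by
    simpa [Function.comp_def] using (continuous_fst.tendsto (0 : ℂ × ℂ × ℂ)).comp hd0
  have hd2 : Tendsto (fun n => (d n).2.1) atTop (𝓝 (0 : ℂ)) := by
    simpa [Function.comp_def] using ((continuous_fst.comp continuous_snd).tendsto (0 : ℂ × ℂ × ℂ)).comp hd0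
  have hd3 : Tendsto (fun n => (d n).2.2) atTop (𝓝 (0 : ℂ)) := by
    simpa [Function.comp_def] using ((continuous_snd.comp continuous_snd).tendsto (0 : ℂ × ℂ × ℂ)).comp hd0
  have hcd1 : Tendsto (fun n => ((c n : ℝ) : ℂ) * (d n).1) atTop (𝓝 w.1) := by
    have h := (continuous_fst.tendsto w).comp hcd
    simpa [Complex.real_smul, Function.comp_def] using h
  have hcd2 : Tendsto (fun n => ((c n : ℝ) : ℂ) * (d n).2.1) atTop (𝓝 w.2.1) := by
    have h := ((continuous_fst.comp continuous_snd).tendsto w).comp hcd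
    simpa [Complex.real_smul, Function.comp_def] using h
  have hcd3 : Tendsto (fun n => ((c n : ℝ) : ℂ) * (d n).2.2) atTop (𝓝 w.2.2) := by
    have h := ((continuous_snd.comp continuous_snd).tendsto w).comp hcd
    simpa [Complex.real_smul, Function.comp_def] using h
  -- membership conditions, in normSq form
  have hsq : ∀ z : ℂ, ‖z‖ ^ 2 = normSq z := fun z => Complex.sq_norm z
  have hp1 : normSq p.1 - 2 * a = normSq p.2.1 := by
    have := hp.1; rwa [hsq, hsq] at this
  have hp2 : normSq p.2.1 = normSq p.2.2 := by
    have := hp.2.1; rwa [hsq, hsq] at this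
  -- first-order constraint from |z1|^2 - |z2|^2 = 2a
  have lim1 := lim_aux p.1 hd1 hcd1
  have lim2 := lim_aux p.2.1 hd2 hcd2
  have lim3 := lim_aux p.2.2 hd3 hcd3
  have e12 : (fun n => c n * (normSq (p.1 + (d n).1) - normSq p.1))
      =ᶠ[atTop] (fun n => c n * (normSq (p.2.1 + (d n).2.1) - normSq p.2.1)) := by
    filter_upwards [hmem] with n hn
    have h1 : normSq (p.1 + (d n).1) - 2 * a = normSq (p.2.1 + (d n).2.1) := by
      have := hn.1; rwa [hsq, hsq] at this
    have h2 : normSq (p.2.1 + (d n).2.1) = normSq (p.2.2 + (d n).2.2) := by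
      have := hn.2.1; rwa [hsq, hsq] at this
    have : normSq (p.1 + (d n).1) - normSq p.1
        = normSq (p.2.1 + (d n).2.1) - normSq p.2.1 := by linarith
    rw [this]
  have e23 : (fun n => c n * (normSq (p.2.1 + (d n).2.1) - normSq p.2.1))
      =ᶠ[atTop] (fun n => c n * (normSq (p.2.2 + (d n).2.2) - normSq p.2.2)) := by
    filter_upwards [hmem] with n hn
    have h2 : normSq (p.2.1 + (d n).2.1) = normSq (p.2.2 + (d n).2.2) := by
      have := hn.2.1; rwa [hsq, hsq] at this
    have : normSq (p.2.1 + (d n).2.1) - normSq p.2.1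
        = normSq (p.2.2 + (d n).2.2) - normSq p.2.2 := by linarith
    rw [this]
  have u12 : 2 * (p.1 * (starRingEnd ℂ) w.1).re = 2 * (p.2.1 * (starRingEnd ℂ) w.2.1).re :=
    tendsto_nhds_unique (lim1.congr' e12) lim2
  have u23 : 2 * (p.2.1 * (starRingEnd ℂ) w.2.1).re = 2 * (p.2.2 * (starRingEnd ℂ) w.2.2).re :=
    tendsto_nhds_unique (lim2.congr' e23) lim3
  have hflip : ∀ z v : ℂ, (z * (starRingEnd ℂ) v).re = ((starRingEnd ℂ) z * v).re := by
    intro z v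
    simp only [Complex.mul_re, Complex.conj_re, Complex.conj_im]
    ring
  have c12 : ((starRingEnd ℂ) p.1 * w.1).re = ((starRingEnd ℂ) p.2.1 * w.2.1).re := by
    have := u12; rw [hflip, hflip] at this; linarith
  have c23 : ((starRingEnd ℂ) p.2.1 * w.2.1).re = ((starRingEnd ℂ) p.2.2 * w.2.2).re := by
    have := u23; rw [hflip, hflip] at this; linarith
  -- first-order constraint from Im(z1 z2 z3) = 0
  have limG : Tendsto (fun n => ((c n : ℝ) : ℂ) *
      ((p.1 + (d n).1) * (p.2.1 + (d n).2.1) * (p.2.2 + (d n).2.2) - p.1 * p.2.1 * p.2.2))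
      atTop (𝓝 (w.1 * p.2.1 * p.2.2 + p.1 * w.2.1 * p.2.2 + p.1 * p.2.1 * w.2.2)) := by
    have hR : Tendsto (fun n =>
        (((c n : ℝ) : ℂ) * (d n).1) * (p.2.1 * p.2.2)
        + p.1 * (((c n : ℝ) : ℂ) * (d n).2.1) * p.2.2
        + p.1 * p.2.1 * (((c n : ℝ) : ℂ) * (d n).2.2)
        + (((c n : ℝ) : ℂ) * (d n).1) * ((d n).2.1 * p.2.2)
        + (((c n : ℝ) : ℂ) * (d n).1) * (p.2.1 * (d n).2.2)
        + p.1 * (((c n : ℝ) : ℂ) * (d n).2.1) * (d n).2.2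
        + (((c n : ℝ) : ℂ) * (d n).1) * ((d n).2.1 * (d n).2.2)) atTop
        (𝓝 (w.1 * (p.2.1 * p.2.2) + p.1 * w.2.1 * p.2.2 + p.1 * p.2.1 * w.2.2
          + w.1 * (0 * p.2.2) + w.1 * (p.2.1 * 0) + p.1 * w.2.1 * 0 + w.1 * (0 * 0))) := by
      exact (((((((hcd1.mul tendsto_const_nhds).add
        ((tendsto_const_nhds.mul hcd2).mul tendsto_const_nhds)).add
        ((tendsto_const_nhds.mul tendsto_const_nhds).mul hcd3)).add
        (hcd1.mul (hd2.mul tendsto_const_nhds))).add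
        (hcd1.mul (tendsto_const_nhds.mul hd3))).add
        ((tendsto_const_nhds.mul hcd2).mul hd3)).add
        (hcd1.mul (hd2.mul hd3)))
    have hfun : ∀ n : ℕ,
        (((c n : ℝ) : ℂ) * (d n).1) * (p.2.1 * p.2.2)
        + p.1 * (((c n : ℝ) : ℂ) * (d n).2.1) * p.2.2
        + p.1 * p.2.1 * (((c n : ℝ) : ℂ) * (d n).2.2)
        + (((c n : ℝ) : ℂ) * (d n).1) * ((d n).2.1 * p.2.2)
        + (((c n : ℝ) : ℂ) * (d n).1) * (p.2.1 * (d n).2.2)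
        + p.1 * (((c n : ℝ) : ℂ) * (d n).2.1) * (d n).2.2
        + (((c n : ℝ) : ℂ) * (d n).1) * ((d n).2.1 * (d n).2.2)
        = ((c n : ℝ) : ℂ) *
          ((p.1 + (d n).1) * (p.2.1 + (d n).2.1) * (p.2.2 + (d n).2.2)
            - p.1 * p.2.1 * p.2.2) := fun n => by ring
    have hR2 := hR.congr hfun
    convert hR2 using 2
    ring
  have GIm : (w.1 * p.2.1 * p.2.2 + p.1 * w.2.1 * p.2.2 + p.1 * p.2.1 * w.2.2).im = 0 := by
    have him : Tendsto (fun n => (((c n : ℝ) : ℂ) *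
        ((p.1 + (d n).1) * (p.2.1 + (d n).2.1) * (p.2.2 + (d n).2.2) - p.1 * p.2.1 * p.2.2)).im)
        atTop (𝓝 ((w.1 * p.2.1 * p.2.2 + p.1 * w.2.1 * p.2.2 + p.1 * p.2.1 * w.2.2).im)) :=
      (Complex.continuous_im.tendsto _).comp limG
    have hz : (fun n => (((c n : ℝ) : ℂ) *
        ((p.1 + (d n).1) * (p.2.1 + (d n).2.1) * (p.2.2 + (d n).2.2) - p.1 * p.2.1 * p.2.2)).im)
        =ᶠ[atTop] (fun _ => (0 : ℝ)) := by
      filter_upwards [hmem] with n hn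
      have h3 : ((p.1 + (d n).1) * (p.2.1 + (d n).2.1) * (p.2.2 + (d n).2.2)).im = 0 := hn.2.2.1
      have hmi : ((((c n : ℝ) : ℂ)) *
          ((p.1 + (d n).1) * (p.2.1 + (d n).2.1) * (p.2.2 + (d n).2.2)
            - p.1 * p.2.1 * p.2.2)).im
          = c n * ((p.1 + (d n).1) * (p.2.1 + (d n).2.1) * (p.2.2 + (d n).2.2)
            - p.1 * p.2.1 * p.2.2).im := by
        simp [Complex.mul_im]
      rw [hmi, Complex.sub_im, h3, hp.2.2.1]
      ring
    exact tendsto_nhds_unique (him.congr' hz) tendsto_const_nhds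
  refine ⟨c12, c23, GIm, ?_⟩
  -- degenerate case p2 = p3 = 0
  intro h2z h3z
  have hns : Complex.normSq w.2.1 = Complex.normSq w.2.2 := by
    have ev1 : (fun n => normSq (((c n : ℝ) : ℂ) * (d n).2.1))
        =ᶠ[atTop] (fun n => normSq (((c n : ℝ) : ℂ) * (d n).2.2)) := by
      filter_upwards [hmem] with n hn
      have h2 : normSq (p.2.1 + (d n).2.1) = normSq (p.2.2 + (d n).2.2) := by
        have := hn.2.1; rwa [hsq, hsq] at this
      rw [h2z, h3z, zero_add, zero_add] at h2
      rw [Complex.normSq_mul, Complex.normSq_mul, h2]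
    have t1 : Tendsto (fun n => normSq (((c n : ℝ) : ℂ) * (d n).2.1)) atTop
        (𝓝 (normSq w.2.1)) := (Complex.continuous_normSq.tendsto _).comp hcd2
    have t2 : Tendsto (fun n => normSq (((c n : ℝ) : ℂ) * (d n).2.2)) atTop
        (𝓝 (normSq w.2.2)) := (Complex.continuous_normSq.tendsto _).comp hcd3
    exact tendsto_nhds_unique (t1.congr' ev1) t2
  have hs : Tendsto (fun n => (p.1 + (d n).1) * (((c n : ℝ) : ℂ) * (d n).2.1)
      * (((c n : ℝ) : ℂ) * (d n).2.2)) atTop (𝓝 (p.1 * w.2.1 * w.2.2)) := by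
    have h0 : Tendsto (fun n => p.1 + (d n).1) atTop (𝓝 (p.1 + 0)) :=
      tendsto_const_nhds.add hd1
    rw [add_zero] at h0
    exact (h0.mul hcd2).mul hcd3
  have hsid : ∀ᶠ n in atTop, ((p.1 + (d n).1) * (((c n : ℝ) : ℂ) * (d n).2.1)
      * (((c n : ℝ) : ℂ) * (d n).2.2)).im = 0 ∧
      0 ≤ ((p.1 + (d n).1) * (((c n : ℝ) : ℂ) * (d n).2.1)
      * (((c n : ℝ) : ℂ) * (d n).2.2)).re := by
    filter_upwards [hmem] with n hn
    have hq1 : (p + d n).1 = p.1 + (d n).1 := rfl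
    have hq2 : (p + d n).2.1 = (d n).2.1 := by
      show p.2.1 + (d n).2.1 = (d n).2.1
      rw [h2z, zero_add]
    have hq3 : (p + d n).2.2 = (d n).2.2 := by
      show p.2.2 + (d n).2.2 = (d n).2.2
      rw [h3z, zero_add]
    have him0 : ((p.1 + (d n).1) * (d n).2.1 * (d n).2.2).im = 0 := by
      have := hn.2.2.1; rwa [hq1, hq2, hq3] at this
    have hre0 : 0 ≤ ((p.1 + (d n).1) * (d n).2.1 * (d n).2.2).re := by
      have := hn.2.2.2; rwa [hq1, hq2, hq3] at this
    have hsn : (p.1 + (d n).1) * (((c n : ℝ) : ℂ) * (d n).2.1)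
        * (((c n : ℝ) : ℂ) * (d n).2.2)
        = (((c n * c n : ℝ)) : ℂ) * ((p.1 + (d n).1) * (d n).2.1 * (d n).2.2) := by
      push_cast; ring
    constructor
    · rw [hsn]
      simp [Complex.mul_im, him0]
    · rw [hsn]
      have : ((((c n * c n : ℝ)) : ℂ) * ((p.1 + (d n).1) * (d n).2.1 * (d n).2.2)).re
          = (c n * c n) * ((p.1 + (d n).1) * (d n).2.1 * (d n).2.2).re := by
        simp [Complex.mul_re]
      rw [this]
      exact mul_nonneg (mul_self_nonneg _) hre0
  have hIm : (p.1 * w.2.1 * w.2.2).im = 0 := by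
    have t1 : Tendsto (fun n => ((p.1 + (d n).1) * (((c n : ℝ) : ℂ) * (d n).2.1)
        * (((c n : ℝ) : ℂ) * (d n).2.2)).im) atTop (𝓝 ((p.1 * w.2.1 * w.2.2).im)) :=
      (Complex.continuous_im.tendsto _).comp hs
    have ev : (fun n => ((p.1 + (d n).1) * (((c n : ℝ) : ℂ) * (d n).2.1)
        * (((c n : ℝ) : ℂ) * (d n).2.2)).im) =ᶠ[atTop] (fun _ => (0 : ℝ)) := by
      filter_upwards [hsid] with n hn; exact hn.1
    exact tendsto_nhds_unique (t1.congr' ev) tendsto_const_nhds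
  have hRe : 0 ≤ (p.1 * w.2.1 * w.2.2).re := by
    have t1 : Tendsto (fun n => ((p.1 + (d n).1) * (((c n : ℝ) : ℂ) * (d n).2.1)
        * (((c n : ℝ) : ℂ) * (d n).2.2)).re) atTop (𝓝 ((p.1 * w.2.1 * w.2.2).re)) :=
      (Complex.continuous_re.tendsto _).comp hs
    exact ge_of_tendsto t1 (by filter_upwards [hsid] with n hn; exact hn.2)
  have hW1 : ((starRingEnd ℂ) p.1 * w.1).re = 0 := by
    have ev : (fun n => c n * (normSq (p.1 + (d n).1) - normSq p.1))
        =ᶠ[atTop] (fun n => ((((c n : ℝ) : ℂ) * (d n).2.1)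
          * (starRingEnd ℂ) ((d n).2.1)).re) := by
      filter_upwards [hmem] with n hn
      have h1 : normSq (p.1 + (d n).1) - 2 * a = normSq (p.2.1 + (d n).2.1) := by
        have := hn.1; rwa [hsq, hsq] at this
      rw [h2z, zero_add] at h1
      have hp10 : normSq p.1 - 2 * a = 0 := by
        rw [hp1, h2z]; simp
      have : normSq (p.1 + (d n).1) - normSq p.1 = normSq ((d n).2.1) := by linarith
      rw [this, seq_id2 (c n) ((d n).2.1)]
    have t2 : Tendsto (fun n => ((((c n : ℝ) : ℂ) * (d n).2.1)
        * (starRingEnd ℂ) ((d n).2.1)).re) atTop (𝓝 ((w.2.1 * (starRingEnd ℂ) 0).re)) :=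
      (Complex.continuous_re.tendsto _).comp
        (hcd2.mul ((Complex.continuous_conj.tendsto _).comp hd2))
    have t2' : Tendsto (fun n => ((((c n : ℝ) : ℂ) * (d n).2.1)
        * (starRingEnd ℂ) ((d n).2.1)).re) atTop (𝓝 0) := by simpa using t2
    have hu : 2 * (p.1 * (starRingEnd ℂ) w.1).re = 0 :=
      tendsto_nhds_unique (lim1.congr' ev) t2'
    rw [hflip] at hu; linarith
  exact ⟨hns, hIm, hRe, hW1⟩

-- representation lemma
lemma rep_lemma {q v : ℂ} (hq : q ≠ 0) :
    v = q * (((((starRingEnd ℂ) q * v).re * (normSq q)⁻¹ : ℝ) : ℂ)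
      + Complex.I * ((((starRingEnd ℂ) q * v).im * (normSq q)⁻¹ : ℝ) : ℂ)) := by
  have hn : (normSq q : ℝ) ≠ 0 := by simpa using hq
  have hcq : (starRingEnd ℂ) q ≠ 0 := by simpa using hq
  apply mul_left_cancel₀ hcq
  have h1 : (starRingEnd ℂ) q * (q * (((((starRingEnd ℂ) q * v).re * (normSq q)⁻¹ : ℝ) : ℂ)
      + Complex.I * ((((starRingEnd ℂ) q * v).im * (normSq q)⁻¹ : ℝ) : ℂ)))
      = (q * (starRingEnd ℂ) q) * (((((starRingEnd ℂ) q * v).re * (normSq q)⁻¹ : ℝ) : ℂ)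
      + Complex.I * ((((starRingEnd ℂ) q * v).im * (normSq q)⁻¹ : ℝ) : ℂ)) := by ring
  rw [h1, Complex.mul_conj]
  have h2 : ((starRingEnd ℂ) q * v)
      = ((((starRingEnd ℂ) q * v).re : ℝ) : ℂ)
        + ((((starRingEnd ℂ) q * v).im : ℝ) : ℂ) * Complex.I := (Complex.re_add_im _).symm
  rw [h2]
  have hnc : ((normSq q : ℝ) : ℂ) ≠ 0 := by exact_mod_cast hn
  push_cast
  field_simp
  simp
  ring

lemma case1_form {a : ℝ} {p w : ℂ × ℂ × ℂ} (hp : p ∈ HLset a)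
    (h1 : p.1 ≠ 0) (h2 : p.2.1 ≠ 0) (h3 : p.2.2 ≠ 0) {t : ℝ}
    (ht : p.1 * p.2.1 * p.2.2 = (t : ℂ)) (ht0 : 0 < t)
    (hw : w ∈ tangentConeAt ℝ (HLset a) p) :
    ∃ ρ s₁ s₂ s₃ : ℝ, s₃ = -s₁ - s₂ ∧
      w.1 = p.1 * (((ρ * (normSq p.1)⁻¹ : ℝ) : ℂ) + Complex.I * ((s₁ : ℝ) : ℂ)) ∧
      w.2.1 = p.2.1 * (((ρ * (normSq p.2.1)⁻¹ : ℝ) : ℂ) + Complex.I * ((s₂ : ℝ) : ℂ)) ∧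
      w.2.2 = p.2.2 * (((ρ * (normSq p.2.2)⁻¹ : ℝ) : ℂ) + Complex.I * ((s₃ : ℝ) : ℂ)) := by
  obtain ⟨c12, c23, GIm, _⟩ := tc_facts hp hw
  set ρ : ℝ := ((starRingEnd ℂ) p.1 * w.1).re with hρ
  set s₁ : ℝ := ((starRingEnd ℂ) p.1 * w.1).im * (normSq p.1)⁻¹ with hs₁
  set s₂ : ℝ := ((starRingEnd ℂ) p.2.1 * w.2.1).im * (normSq p.2.1)⁻¹ with hs₂
  set s₃ : ℝ := ((starRingEnd ℂ) p.2.2 * w.2.2).im * (normSq p.2.2)⁻¹ with hs₃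
  have e1 : w.1 = p.1 * (((ρ * (normSq p.1)⁻¹ : ℝ) : ℂ) + Complex.I * ((s₁ : ℝ) : ℂ)) := by
    rw [hρ, hs₁]; exact rep_lemma h1
  have e2 : w.2.1 = p.2.1 * (((ρ * (normSq p.2.1)⁻¹ : ℝ) : ℂ) + Complex.I * ((s₂ : ℝ) : ℂ)) := by
    have h := rep_lemma (v := w.2.1) h2
    rw [← c12] at h
    exact h
  have e3 : w.2.2 = p.2.2 * (((ρ * (normSq p.2.2)⁻¹ : ℝ) : ℂ) + Complex.I * ((s₃ : ℝ) : ℂ)) := by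
    have h := rep_lemma (v := w.2.2) h3
    rw [← c23, ← c12] at h
    exact h
  refine ⟨ρ, s₁, s₂, s₃, ?_, e1, e2, e3⟩
  have hGsub : w.1 * p.2.1 * p.2.2 + p.1 * w.2.1 * p.2.2 + p.1 * p.2.1 * w.2.2
      = (p.1 * p.2.1 * p.2.2) * ((((ρ * (normSq p.1)⁻¹ : ℝ) : ℂ) + Complex.I * ((s₁ : ℝ) : ℂ))
        + (((ρ * (normSq p.2.1)⁻¹ : ℝ) : ℂ) + Complex.I * ((s₂ : ℝ) : ℂ))
        + (((ρ * (normSq p.2.2)⁻¹ : ℝ) : ℂ) + Complex.I * ((s₃ : ℝ) : ℂ))) := by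
    rw [e1, e2, e3]; ring
  rw [hGsub, ht] at GIm
  have h0 : t * (s₁ + s₂ + s₃) = 0 := by
    simp only [Complex.mul_im, Complex.add_im, Complex.add_re, Complex.mul_re,
      Complex.I_re, Complex.I_im, Complex.ofReal_re, Complex.ofReal_im] at GIm
    linear_combination GIm
  have h0' : s₁ + s₂ + s₃ = 0 := by
    rcases mul_eq_zero.1 h0 with h | h
    · exact absurd h ht0.ne'
    · exact h
  linarith

lemma case2_form {a : ℝ} {p w : ℂ × ℂ × ℂ} (hp : p ∈ HLset a) (h1 : p.1 ≠ 0)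
    (h2 : p.2.1 = 0) (h3 : p.2.2 = 0) (hw : w ∈ tangentConeAt ℝ (HLset a) p) :
    ∃ τ : ℝ, w.1 = Complex.I * ((τ : ℝ) : ℂ) * p.1 ∧
      w.2.2 = (starRingEnd ℂ) (((((‖p.1‖)⁻¹ : ℝ) : ℂ) * p.1) * w.2.1) := by
  obtain ⟨_, _, _, hcase⟩ := tc_facts hp hw
  obtain ⟨hns, hIm, hRe, hW1⟩ := hcase h2 h3
  obtain ⟨τ, hτ⟩ := key_w1 h1 hW1
  set r : ℝ := ‖p.1‖ with hr
  have hr0 : 0 < r := by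
    rw [hr]; exact norm_pos_iff.mpr h1
  set u : ℂ := (((r⁻¹ : ℝ) : ℂ)) * p.1 with hu
  have hpu : p.1 = ((r : ℝ) : ℂ) * u := by
    rw [hu]
    rw [show ((r : ℝ) : ℂ) * ((((r⁻¹ : ℝ) : ℂ)) * p.1) = (((r * r⁻¹ : ℝ) : ℂ)) * p.1 by
      push_cast; ring]
    rw [mul_inv_cancel₀ hr0.ne']
    simp
  have hnsq : normSq p.1 = r ^ 2 := by rw [hr, ← Complex.sq_norm]
  have hunit : u.re ^ 2 + u.im ^ 2 = 1 := by
    have h9 : normSq u = 1 := by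
      rw [hu, Complex.normSq_mul, Complex.normSq_ofReal, hnsq]
      rw [show r⁻¹ * r⁻¹ * r ^ 2 = (r⁻¹ * r) * (r⁻¹ * r) by ring,
        inv_mul_cancel₀ hr0.ne', one_mul]
    rw [← h9, Complex.normSq_apply]
    try ring
  refine ⟨τ, hτ, ?_⟩
  · apply key_conj
    · rw [Complex.normSq_mul]
      have hnu : normSq u = 1 := by
        have := hunit; rw [Complex.normSq_apply]; linarith
      rw [hnu, one_mul]; exact hns
    · have hid : u * w.2.1 * w.2.2 = (((r⁻¹ : ℝ) : ℂ)) * (p.1 * w.2.1 * w.2.2) := by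
        rw [hu]; ring
      rw [hid]
      simp [Complex.mul_im, hIm]
    · have hid : u * w.2.1 * w.2.2 = (((r⁻¹ : ℝ) : ℂ)) * (p.1 * w.2.1 * w.2.2) := by
        rw [hu]; ring
      rw [hid]
      have : ((((r⁻¹ : ℝ) : ℂ)) * (p.1 * w.2.1 * w.2.2)).re
          = r⁻¹ * (p.1 * w.2.1 * w.2.2).re := by
        simp [Complex.mul_re]
      rw [this]
      exact mul_nonneg (inv_nonneg.2 hr0.le) hRe

lemma det3_expand (a b c d e f g h i : ℂ) :
    Matrix.det !![a, b, c; d, e, f; g, h, i] =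
      a*e*i - a*f*h - b*d*i + b*f*g + c*d*h - c*e*g := by
  simp [Matrix.det_fin_three]

/- STATEMENT 9 -/
set_option maxHeartbeats 4000000 in
theorem stmt9 (a : ℝ) (ha : 0 ≤ a) :
    ∀ p ∈ HLset a, p ≠ 0 →
      (∀ w₁ ∈ tangentConeAt ℝ (HLset a) p, ∀ w₂ ∈ tangentConeAt ℝ (HLset a) p,
        ∀ w₃ ∈ tangentConeAt ℝ (HLset a) p, (holVolForm w₁ w₂ w₃).im = 0) ∧
      (∀ w ∈ tangentConeAt ℝ (HLset a) p, ∀ z ∈ tangentConeAt ℝ (HLset a) p,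
        stdKahlerForm w z = 0) := by
  intro p hp hp0
  by_cases h2 : p.2.1 = 0
  · -- degenerate case
    have h3 : p.2.2 = 0 := by
      have h := hp.2.1
      rw [h2] at h
      simp only [norm_zero] at h
      have habs : ‖p.2.2‖ = 0 := by nlinarith [norm_nonneg p.2.2]
      exact norm_eq_zero.mp habs
    have h1 : p.1 ≠ 0 := by
      intro hh
      apply hp0
      have hpe : p = (p.1, p.2.1, p.2.2) := rfl
      rw [hpe, hh, h2, h3]
      rfl
    constructor
    · intro w₁ hw₁ w₂ hw₂ w₃ hw₃
      obtain ⟨t1, e11, e13⟩ := case2_form hp h1 h2 h3 hw₁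
      obtain ⟨t2, e21, e23⟩ := case2_form hp h1 h2 h3 hw₂
      obtain ⟨t3, e31, e33⟩ := case2_form hp h1 h2 h3 hw₃
      simp only [holVolForm, det3_expand]
      rw [e11, e13, e21, e23, e31, e33]
      simp only [map_mul, Complex.conj_ofReal]
      simp only [Complex.add_im, Complex.add_re, Complex.sub_im, Complex.sub_re,
        Complex.mul_im, Complex.mul_re, Complex.I_re, Complex.I_im, Complex.ofReal_re,
        Complex.ofReal_im, Complex.conj_re, Complex.conj_im]
      ring
    · intro w hw z hz
      obtain ⟨t1, e11, e13⟩ := case2_form hp h1 h2 h3 hw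
      obtain ⟨t2, e21, e23⟩ := case2_form hp h1 h2 h3 hz
      have habs : ‖p.1‖ ≠ 0 := norm_ne_zero_iff.mpr h1
      have hn : (p.1.re * p.1.re + p.1.im * p.1.im)
          * ((‖p.1‖)⁻¹ * (‖p.1‖)⁻¹) = 1 := by
        rw [show p.1.re * p.1.re + p.1.im * p.1.im = Complex.normSq p.1 from by
          rw [Complex.normSq_apply], ← Complex.sq_norm]
        field_simp
      simp only [stdKahlerForm]
      rw [e11, e13, e21, e23]
      simp only [map_mul, Complex.conj_ofReal, Complex.conj_conj, map_add]
      simp only [Complex.add_im, Complex.add_re, Complex.sub_im, Complex.sub_re,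
        Complex.mul_im, Complex.mul_re, Complex.I_re, Complex.I_im, Complex.ofReal_re,
        Complex.ofReal_im, Complex.conj_re, Complex.conj_im]
      linear_combination (-(w.2.1.re * z.2.1.im - w.2.1.im * z.2.1.re)) * hn
  · -- generic case
    have h2' : p.2.1 ≠ 0 := h2
    have h3 : p.2.2 ≠ 0 := by
      intro hh
      apply h2'
      have h := hp.2.1
      rw [hh] at h
      simp only [norm_zero] at h
      have habs : ‖p.2.1‖ = 0 := by nlinarith [norm_nonneg p.2.1]
      exact norm_eq_zero.mp habs
    have h1 : p.1 ≠ 0 := by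
      intro hh
      have h := hp.1
      rw [hh] at h
      simp only [norm_zero] at h
      have habs : 0 < ‖p.2.1‖ := norm_pos_iff.mpr h2'
      nlinarith
    set t : ℝ := (p.1 * p.2.1 * p.2.2).re with htdef
    have ht : p.1 * p.2.1 * p.2.2 = (t : ℂ) := by
      apply Complex.ext
      · simp [htdef]
      · simpa using hp.2.2.1
    have ht0 : 0 < t := by
      rcases lt_or_eq_of_le hp.2.2.2 with h | h
      · exact h
      · exfalso
        apply mul_ne_zero (mul_ne_zero h1 h2') h3
        have ht' : t = 0 := htdef.trans h.symm
        rw [ht, ht']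
        simp
    constructor
    · intro w₁ hw₁ w₂ hw₂ w₃ hw₃
      obtain ⟨ρ₁, s11, s21, s31, hs31, e11, e12, e13⟩ := case1_form hp h1 h2' h3 ht ht0 hw₁
      obtain ⟨ρ₂, s12, s22, s32, hs32, e21, e22, e23⟩ := case1_form hp h1 h2' h3 ht ht0 hw₂
      obtain ⟨ρ₃, s13, s23, s33, hs33, e31, e32, e33⟩ := case1_form hp h1 h2' h3 ht ht0 hw₃
      subst hs31; subst hs32; subst hs33
      have hdet : holVolForm w₁ w₂ w₃ = (p.1 * p.2.1 * p.2.2) *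
          ((((ρ₁ * (normSq p.1)⁻¹ : ℝ) : ℂ) + Complex.I * ((s11 : ℝ) : ℂ)) *
            ((((ρ₂ * (normSq p.2.1)⁻¹ : ℝ) : ℂ) + Complex.I * ((s22 : ℝ) : ℂ)) *
              (((ρ₃ * (normSq p.2.2)⁻¹ : ℝ) : ℂ) + Complex.I * (((-s13 - s23 : ℝ)) : ℂ)) -
             (((ρ₂ * (normSq p.2.2)⁻¹ : ℝ) : ℂ) + Complex.I * (((-s12 - s22 : ℝ)) : ℂ)) *
              (((ρ₃ * (normSq p.2.1)⁻¹ : ℝ) : ℂ) + Complex.I * ((s23 : ℝ) : ℂ)))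
          - (((ρ₁ * (normSq p.2.1)⁻¹ : ℝ) : ℂ) + Complex.I * ((s21 : ℝ) : ℂ)) *
            ((((ρ₂ * (normSq p.1)⁻¹ : ℝ) : ℂ) + Complex.I * ((s12 : ℝ) : ℂ)) *
              (((ρ₃ * (normSq p.2.2)⁻¹ : ℝ) : ℂ) + Complex.I * (((-s13 - s23 : ℝ)) : ℂ)) -
             (((ρ₂ * (normSq p.2.2)⁻¹ : ℝ) : ℂ) + Complex.I * (((-s12 - s22 : ℝ)) : ℂ)) *
              (((ρ₃ * (normSq p.1)⁻¹ : ℝ) : ℂ) + Complex.I * ((s13 : ℝ) : ℂ)))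
          + (((ρ₁ * (normSq p.2.2)⁻¹ : ℝ) : ℂ) + Complex.I * (((-s11 - s21 : ℝ)) : ℂ)) *
            ((((ρ₂ * (normSq p.1)⁻¹ : ℝ) : ℂ) + Complex.I * ((s12 : ℝ) : ℂ)) *
              (((ρ₃ * (normSq p.2.1)⁻¹ : ℝ) : ℂ) + Complex.I * ((s23 : ℝ) : ℂ)) -
             (((ρ₂ * (normSq p.2.1)⁻¹ : ℝ) : ℂ) + Complex.I * ((s22 : ℝ) : ℂ)) *
              (((ρ₃ * (normSq p.1)⁻¹ : ℝ) : ℂ) + Complex.I * ((s13 : ℝ) : ℂ)))) := by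
        simp only [holVolForm, det3_expand]
        rw [e11, e12, e13, e21, e22, e23, e31, e32, e33]
        ring
      rw [hdet, ht]
      simp only [Complex.add_im, Complex.add_re, Complex.sub_im, Complex.sub_re,
        Complex.mul_im, Complex.mul_re, Complex.I_re, Complex.I_im, Complex.ofReal_re,
        Complex.ofReal_im]
      ring
    · intro w hw z hz
      obtain ⟨ρ₁, s1, s2, s3, hs3, e11, e12, e13⟩ := case1_form hp h1 h2' h3 ht ht0 hw
      obtain ⟨ρ₂, r1, r2, r3, hr3, e21, e22, e23⟩ := case1_form hp h1 h2' h3 ht ht0 hz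
      subst hs3; subst hr3
      have hn1 : Complex.normSq p.1 ≠ 0 := by simpa using h1
      have hn2 : Complex.normSq p.2.1 ≠ 0 := by simpa using h2'
      have hn3 : Complex.normSq p.2.2 ≠ 0 := by simpa using h3
      have hm1 : (p.1.re * p.1.re + p.1.im * p.1.im) * (Complex.normSq p.1)⁻¹ = 1 := by
        rw [show p.1.re * p.1.re + p.1.im * p.1.im = Complex.normSq p.1 from by
          rw [Complex.normSq_apply]]
        exact mul_inv_cancel₀ hn1
      have hm2 : (p.2.1.re * p.2.1.re + p.2.1.im * p.2.1.im) * (Complex.normSq p.2.1)⁻¹ = 1 := by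
        rw [show p.2.1.re * p.2.1.re + p.2.1.im * p.2.1.im = Complex.normSq p.2.1 from by
          rw [Complex.normSq_apply]]
        exact mul_inv_cancel₀ hn2
      have hm3 : (p.2.2.re * p.2.2.re + p.2.2.im * p.2.2.im) * (Complex.normSq p.2.2)⁻¹ = 1 := by
        rw [show p.2.2.re * p.2.2.re + p.2.2.im * p.2.2.im = Complex.normSq p.2.2 from by
          rw [Complex.normSq_apply]]
        exact mul_inv_cancel₀ hn3
      simp only [stdKahlerForm]
      rw [e11, e12, e13, e21, e22, e23]
      simp only [map_mul, Complex.conj_ofReal, map_add, Complex.conj_conj, map_sub]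
      simp only [Complex.add_im, Complex.add_re, Complex.sub_im, Complex.sub_re,
        Complex.mul_im, Complex.mul_re, Complex.I_re, Complex.I_im, Complex.ofReal_re,
        Complex.ofReal_im, Complex.conj_re, Complex.conj_im]
      linear_combination (ρ₁ * r1 - ρ₂ * s1) * hm1 + (ρ₁ * r2 - ρ₂ * s2) * hm2
        - (ρ₁ * r1 + ρ₁ * r2 - ρ₂ * s1 - ρ₂ * s2) * hm3
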